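/- With X = L^p(0,1) and the countable family of semigroups T_j as above (doubling on [0,4^{−j}) composed with left translation and truncation), the switched system is not uniformly exponentially bounded: for each n ∈ ℕ let σ_n switch at times τ_k = 4^{−k} through modes j_k = k+1 (k = 0,…,n); then for every ε ∈ (0, 4^{−n}), ‖T_{σ_n}(1−ε)‖ ≥ 2^{n/p}, hence sup over n and ε ∈ [0,1] of ‖T_{σ_n}(1−ε)‖ = +∞. -/

import Mathlib

open MeasureTheory Real Filter Set Topology

/-- The mode-`j` semigroup on `L^p(0,1)`: left translation with truncation and a gain
`2^{1/p}` on the interval `[0, 4^{−j})`. -/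
noncomputable def Tmode (p : ℝ) (j : ℕ) (t : ℝ) (f : ℝ → ℝ) : ℝ → ℝ := fun s =>
  if 0 ≤ s ∧ s ≤ 1 - t then
    (if s < ((4:ℝ) ^ j)⁻¹ then (2:ℝ) ^ (1 / p) * f (s + t) else f (s + t))
  else 0

/-- The first `n` stages of the destabilizing signal `σ_n`: mode `k+1` acts for the duration
`3·4^{−(k+1)}`, i.e. on the time interval `[1 − 4^{−k}, 1 − 4^{−(k+1)})`. -/
noncomputable def steps (p : ℝ) : ℕ → (ℝ → ℝ) → ℝ → ℝ
  | 0, f => f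
  | Nat.succ k, f => Tmode p (k + 1) (3 * ((4:ℝ) ^ (k + 1))⁻¹) (steps p k f)

/-- The full evolution operator `T_{σ_n}(1−ε)`: after the `n` stages, mode `n+1` acts for the
remaining time `4^{−n} − ε`. -/
noncomputable def fullEvol (p : ℝ) (n : ℕ) (ε : ℝ) (f : ℝ → ℝ) : ℝ → ℝ :=
  Tmode p (n + 1) (((4:ℝ) ^ n)⁻¹ - ε) (steps p n f)

lemma four_inv_le {k n : ℕ} (h : k ≤ n) : ((4:ℝ) ^ n)⁻¹ ≤ ((4:ℝ) ^ k)⁻¹ := by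
  apply inv_anti₀ (by positivity)
  exact pow_le_pow_right₀ (by norm_num) h

lemma four_inv_le_one (k : ℕ) : ((4:ℝ) ^ k)⁻¹ ≤ 1 := by
  rw [inv_le_one_iff₀]
  right
  exact one_le_pow₀ (by norm_num)

lemma steps_eq (p : ℝ) {n : ℕ} {ε : ℝ} (hε : 0 < ε) (hε' : ε < ((4:ℝ)^n)⁻¹) (c : ℝ)
    {k : ℕ} (hk : k ≤ n) :
    steps p k ((Set.Ioo (1 - ε) 1).indicator fun _ => c) =
      (Set.Ioo (((4:ℝ)^k)⁻¹ - ε) ((4:ℝ)^k)⁻¹).indicator fun _ => ((2:ℝ)^(1/p))^k * c := by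
  induction k with
  | zero => simp [steps]
  | succ k ih =>
    have hk' : k ≤ n := Nat.le_of_succ_le hk
    rw [steps, ih hk']
    funext s
    have h4 : ((4:ℝ)^k)⁻¹ = 4 * ((4:ℝ)^(k+1))⁻¹ := by
      rw [pow_succ]
      field_simp
    set a := ((4:ℝ)^(k+1))⁻¹ with ha
    have hapos : 0 < a := by positivity
    have hεa : ε ≤ a := le_trans (le_of_lt hε') (four_inv_le hk)
    have ha1 : 4 * a ≤ 1 := by rw [← h4]; exact four_inv_le_one k
    unfold Tmode
    by_cases hs : a - ε < s ∧ s < a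
    · have h1 : 0 ≤ s := by linarith [hs.1]
      have h2 : s ≤ 1 - 3 * a := by linarith [hs.2]
      have hmem : s + 3 * a ∈ Set.Ioo (((4:ℝ)^k)⁻¹ - ε) ((4:ℝ)^k)⁻¹ := by
        rw [h4, Set.mem_Ioo]
        constructor
        · linarith [hs.1]
        · linarith [hs.2]
      rw [if_pos ⟨h1, h2⟩, if_pos hs.2, Set.indicator_of_mem hmem,
        Set.indicator_of_mem (show s ∈ Set.Ioo (a - ε) a from hs)]
      ring
    · rw [Set.indicator_of_notMem (show s ∉ Set.Ioo (a - ε) a from hs)]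
      by_cases h1 : 0 ≤ s ∧ s ≤ 1 - 3 * a
      · have hnm : s + 3 * a ∉ Set.Ioo (((4:ℝ)^k)⁻¹ - ε) ((4:ℝ)^k)⁻¹ := by
          intro hmem
          rw [h4, Set.mem_Ioo] at hmem
          exact hs ⟨by linarith [hmem.1], by linarith [hmem.2]⟩
        rw [if_pos h1, Set.indicator_of_notMem hnm]
        split <;> ring
      · rw [if_neg h1]

lemma fullEvol_eq (p : ℝ) {n : ℕ} {ε : ℝ} (hε : 0 < ε) (hε' : ε < ((4:ℝ)^n)⁻¹) (c : ℝ) :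
    fullEvol p n ε ((Set.Ioo (1 - ε) 1).indicator fun _ => c) =
      (Set.Ioo (0:ℝ) ε).indicator (fun s =>
        if s < ((4:ℝ)^(n+1))⁻¹ then (2:ℝ)^(1/p) * (((2:ℝ)^(1/p))^n * c)
        else ((2:ℝ)^(1/p))^n * c) := by
  rw [fullEvol, steps_eq p hε hε' c le_rfl]
  funext s
  set b := ((4:ℝ)^n)⁻¹ with hb
  have hb1 : b ≤ 1 := four_inv_le_one n
  unfold Tmode
  by_cases hs : 0 < s ∧ s < ε
  · have h1 : 0 ≤ s := le_of_lt hs.1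
    have h2 : s ≤ 1 - (b - ε) := by linarith [hs.2]
    have hmem : s + (b - ε) ∈ Set.Ioo (b - ε) b := by
      rw [Set.mem_Ioo]
      constructor
      · linarith [hs.1]
      · linarith [hs.2]
    rw [if_pos ⟨h1, h2⟩, Set.indicator_of_mem hmem,
      Set.indicator_of_mem (show s ∈ Set.Ioo (0:ℝ) ε from hs)]
  · rw [Set.indicator_of_notMem (show s ∉ Set.Ioo (0:ℝ) ε from hs)]
    by_cases h1 : 0 ≤ s ∧ s ≤ 1 - (b - ε)
    · have hnm : s + (b - ε) ∉ Set.Ioo (b - ε) b := by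
        intro hmem
        rw [Set.mem_Ioo] at hmem
        exact hs ⟨by linarith [hmem.1], by linarith [hmem.2]⟩
      rw [if_pos h1, Set.indicator_of_notMem hnm]
      split <;> ring
    · rw [if_neg h1]

theorem stmt15 (p : ℝ) (hp : 1 ≤ p) :
    (∀ n : ℕ, ∀ ε : ℝ, 0 < ε → ε < ((4:ℝ) ^ n)⁻¹ → ∃ f : ℝ → ℝ,
      Measurable f ∧ (∫ s in Set.Ioc (0:ℝ) 1, |f s| ^ p) = 1 ∧
      (2:ℝ) ^ n ≤ ∫ s in Set.Ioc (0:ℝ) 1, |fullEvol p n ε f s| ^ p) ∧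
    (∀ M : ℝ, ∃ (n : ℕ) (ε : ℝ) (f : ℝ → ℝ), 0 < ε ∧ ε < ((4:ℝ) ^ n)⁻¹ ∧
      Measurable f ∧ (∫ s in Set.Ioc (0:ℝ) 1, |f s| ^ p) = 1 ∧
      M ≤ ∫ s in Set.Ioc (0:ℝ) 1, |fullEvol p n ε f s| ^ p) := by
  have hppos : 0 < p := lt_of_lt_of_le one_pos hp
  have hpne : p ≠ 0 := ne_of_gt hppos
  have key : ∀ n : ℕ, ∀ ε : ℝ, 0 < ε → ε < ((4:ℝ) ^ n)⁻¹ → ∃ f : ℝ → ℝ,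
      Measurable f ∧ (∫ s in Set.Ioc (0:ℝ) 1, |f s| ^ p) = 1 ∧
      (2:ℝ) ^ n ≤ ∫ s in Set.Ioc (0:ℝ) 1, |fullEvol p n ε f s| ^ p := by
    intro n ε hε hε'
    have hε1 : ε ≤ 1 := le_trans (le_of_lt hε') (four_inv_le_one n)
    set c : ℝ := (ε⁻¹) ^ (1/p) with hcdef
    have hc : 0 < c := Real.rpow_pos_of_pos (inv_pos.mpr hε) _
    have hcp : c ^ p = ε⁻¹ := by
      rw [hcdef, ← Real.rpow_mul (le_of_lt (inv_pos.mpr hε)),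
        one_div_mul_cancel hpne, Real.rpow_one]
    have hval : ∀ m : ℕ, (((2:ℝ)^(1/p))^m * c) ^ p = 2 ^ m * ε⁻¹ := by
      intro m
      have h2p : (0:ℝ) < (2:ℝ)^(1/p) := Real.rpow_pos_of_pos (by norm_num) _
      rw [Real.mul_rpow (by positivity) (le_of_lt hc), hcp]
      congr 1
      rw [← Real.rpow_natCast ((2:ℝ)^(1/p)) m, ← Real.rpow_mul (by norm_num : (0:ℝ) ≤ 2),
        ← Real.rpow_mul (by norm_num : (0:ℝ) ≤ 2), ← Real.rpow_natCast (2:ℝ) m]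
      congr 1
      field_simp
    set f : ℝ → ℝ := (Set.Ioo (1 - ε) 1).indicator fun _ => c with hfdef
    refine ⟨f, measurable_const.indicator measurableSet_Ioo, ?_, ?_⟩
    · -- normalization
      have hptw : ∀ s, |f s| ^ p = (Set.Ioo (1 - ε) 1).indicator (fun _ => ε⁻¹) s := by
        intro s
        by_cases h : s ∈ Set.Ioo (1 - ε) 1
        · rw [hfdef, Set.indicator_of_mem h, Set.indicator_of_mem h, abs_of_pos hc, hcp]
        · rw [hfdef, Set.indicator_of_notMem h, Set.indicator_of_notMem h, abs_zero,
            Real.zero_rpow hpne]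
      rw [show (fun s => |f s| ^ p) = (Set.Ioo (1 - ε) 1).indicator (fun _ => ε⁻¹) from
        funext hptw]
      rw [MeasureTheory.setIntegral_indicator measurableSet_Ioo,
        Set.inter_eq_self_of_subset_right
          (show Set.Ioo (1-ε) 1 ⊆ Set.Ioc (0:ℝ) 1 from fun x hx =>
            ⟨by linarith [hx.1], le_of_lt hx.2⟩),
        MeasureTheory.setIntegral_const, Real.volume_real_Ioo, smul_eq_mul,
        max_eq_left (by linarith)]
      have : (1 : ℝ) - (1 - ε) = ε := by ring
      rw [this]
      field_simp
    · -- lower bound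
      set a := ((4:ℝ)^(n+1))⁻¹ with ha
      set A : ℝ := 2 ^ (n+1) * ε⁻¹ with hA
      set B : ℝ := 2 ^ n * ε⁻¹ with hB
      have h2p : (0:ℝ) < (2:ℝ)^(1/p) := Real.rpow_pos_of_pos (by norm_num) _
      have hF1 : ∀ s, |fullEvol p n ε f s| ^ p =
          (Set.Ioo (0:ℝ) ε).indicator (fun s => if s < a then A else B) s := by
        intro s
        rw [hfdef, fullEvol_eq p hε hε' c]
        by_cases h : s ∈ Set.Ioo (0:ℝ) ε
        · rw [Set.indicator_of_mem h, Set.indicator_of_mem h]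
          by_cases hlt : s < a
          · rw [if_pos hlt, if_pos hlt]
            have : (2:ℝ)^(1/p) * (((2:ℝ)^(1/p))^n * c) = ((2:ℝ)^(1/p))^(n+1) * c := by
              rw [pow_succ]; ring
            rw [this, abs_of_pos (by positivity), hval (n+1)]
          · rw [if_neg hlt, if_neg hlt, abs_of_pos (by positivity), hval n]
        · rw [Set.indicator_of_notMem h, Set.indicator_of_notMem h, abs_zero,
            Real.zero_rpow hpne]
      rw [show (fun s => |fullEvol p n ε f s| ^ p) =
          (Set.Ioo (0:ℝ) ε).indicator (fun s => if s < a then A else B) from funext hF1]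
      rw [MeasureTheory.setIntegral_indicator measurableSet_Ioo,
        Set.inter_eq_self_of_subset_right
          (show Set.Ioo (0:ℝ) ε ⊆ Set.Ioc (0:ℝ) 1 from fun x hx =>
            ⟨hx.1, by linarith [hx.2]⟩)]
      have hgrw : (fun s : ℝ => if s < a then A else B) =
          fun s => (Set.Iio a).indicator (fun _ => A - B) s + B := by
        funext s
        by_cases h : s < a
        · rw [if_pos h, Set.indicator_of_mem (show s ∈ Set.Iio a from h)]; ring
        · rw [if_neg h, Set.indicator_of_notMem (show s ∉ Set.Iio a from h)]; ring
      have hgint : IntegrableOn (fun s : ℝ => if s < a then A else B) (Set.Ioo (0:ℝ) ε) := by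
        rw [hgrw]
        exact ((integrableOn_const measure_Ioo_lt_top.ne).indicator
          measurableSet_Iio).add (integrableOn_const measure_Ioo_lt_top.ne)
      have hBint : IntegrableOn (fun _ : ℝ => B) (Set.Ioo (0:ℝ) ε) :=
        integrableOn_const measure_Ioo_lt_top.ne
      have hmono : ∫ s in Set.Ioo (0:ℝ) ε, B ≤
          ∫ s in Set.Ioo (0:ℝ) ε, (if s < a then A else B) := by
        refine MeasureTheory.setIntegral_mono_on hBint hgint measurableSet_Ioo ?_
        intro x _
        by_cases h : x < a
        · rw [if_pos h, hA, hB]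
          apply mul_le_mul_of_nonneg_right _ (le_of_lt (inv_pos.mpr hε))
          exact pow_le_pow_right₀ (by norm_num) (Nat.le_succ n)
        · rw [if_neg h]
      refine le_trans ?_ hmono
      rw [MeasureTheory.setIntegral_const, Real.volume_real_Ioo, smul_eq_mul,
        max_eq_left (by linarith), sub_zero, hB]
      rw [mul_comm ((2:ℝ)^n) ε⁻¹, ← mul_assoc, mul_inv_cancel₀ (ne_of_gt hε), one_mul]
  refine ⟨key, ?_⟩
  intro M
  obtain ⟨n, hn⟩ : ∃ n : ℕ, M < 2 ^ n := pow_unbounded_of_one_lt M (by norm_num)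
  obtain ⟨f, hm, hnorm, hint⟩ := key n (((4:ℝ)^n)⁻¹/2) (by positivity)
    (half_lt_self (by positivity))
  exact ⟨n, ((4:ℝ)^n)⁻¹/2, f, by positivity, half_lt_self (by positivity), hm, hnorm,
    le_trans (le_of_lt hn) hint⟩
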